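/- Consider sequences (z^k)_{k=0}^K, (z_f^k)_{k=0}^K in ℝ^{d_x}, (y^k)_{k=0}^K, (y_f^k)_{k=0}^K in ℝ^{d_y}, together with (z_g^k, y_g^k), (x_f^{k+1}, y_f^{k+1}, z_f^{k+1}, w_f^{k+1}) for k = 0, …, K−1 such that for every such k: (z_g^k, y_g^k) = α(z^k, y^k) + (1−α)(z_f^k, y_f^k); the inclusions z_f^{k+1} − ∇_x F̂(x_f^{k+1}, y_f^{k+1}) ∈ ∂r(x_f^{k+1}) and w_f^{k+1} + ∇_y F̂(x_f^{k+1}, y_f^{k+1}) ∈ ∂g(y_f^{k+1}) hold; the inexactness condition (8/μ_x)‖z_f^{k+1} + (μ_x/2)(x_f^{k+1} − μ_x^{−1} z_g^k)‖² + θ_y‖w_f^{k+1} + μ_y y_f^{k+1} + θ_y^{−1}(y_f^{k+1} − y_g^k)‖² ≤ (μ_x/8)‖x_f^{k+1} + μ_x^{−1} z_g^k‖² + θ_y^{−1}‖y_f^{k+1} − y_g^k‖² holds; and z^{k+1} = z^k + η_z μ_x^{−1}(z_f^{k+1} − z^k) − η_z(x_f^{k+1} + μ_x^{−1} z_f^{k+1}),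 y^{k+1} = y^k + η_y μ_y(y_f^{k+1} − y^k) − η_y(w_f^{k+1} + μ_y y_f^{k+1}), where α ∈ (0,1], θ_y > 0, η_z = μ_x/2, η_y = min{1/(2μ_y), θ_y/(2α)}. Let (x*, y*) satisfy −∇_x F(x*, y*) ∈ ∂r(x*) and ∇_y F(x*, y*) ∈ ∂g(y*), set z* = −μ_x x*, and assume P(z_f^0, y_f^0) < +∞. Then with ρ = 1/max{2/α, 2α/(θ_y μ_y)} and L^0 = (1/η_z)‖z^0 − z*‖² + (1/η_y)‖y^0 − y*‖² + (2/α)(P(z_f^0, y_f^0) − P(z*, y*)), one has (1/η_z)‖z^K − z*‖² + (1/η_y)‖y^K − y*‖² ≤ (1 − ρ)^K · L^0; in particular ‖(−μ_x^{−1} z^K) − x*‖² + ‖y^K − y*‖² ≤ max{η_z μ_x^{−2}, η_y} · L^0 · (1 − ρ)^K. -/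

import Mathlib

open scoped RealInnerProductSpace

noncomputable section

/-- `p ∈ ∂h(x)` iff `h(x) < +∞` and `h(x') ≥ h(x) + ⟪p, x' − x⟫` for all `x'`. -/
def SubdiffAt {E : Type*} [NormedAddCommGroup E] [InnerProductSpace ℝ E]
    (h : E → EReal) (x : E) : Set E :=
  {p | h x < ⊤ ∧ ∀ x' : E, h x + ((⟪p, x' - x⟫ : ℝ) : EReal) ≤ h x'}

/-- The pointwise conjugate `G(z, y) = sup_x [⟪x, z⟫ − r(x) − F̂(x, y) + g(y)]`. -/
def conjG {E F : Type*} [NormedAddCommGroup E] [InnerProductSpace ℝ E]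
    [NormedAddCommGroup F] [InnerProductSpace ℝ F]
    (r : E → EReal) (g : F → EReal) (Fh : E → F → ℝ) (z : E) (y : F) : EReal :=
  ⨆ x : E, (((⟪x, z⟫ : ℝ) : EReal) - r x - ((Fh x y : ℝ) : EReal) + g y)

/-- `P(z, y) = (1/(2μₓ))‖z‖² + (μ_y/2)‖y‖² + G(z, y)`. -/
def Pfun {E F : Type*} [NormedAddCommGroup E] [InnerProductSpace ℝ E]
    [NormedAddCommGroup F] [InnerProductSpace ℝ F]
    (μx μy : ℝ) (r : E → EReal) (g : F → EReal) (Fh : E → F → ℝ) (z : E) (y : F) : EReal :=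
  ((1 / (2 * μx) * ‖z‖ ^ 2 + μy / 2 * ‖y‖ ^ 2 : ℝ) : EReal) + conjG r g Fh z y

/-- Convexity for extended-real-valued functions. -/
def ERealConvexOn {E : Type*} [AddCommGroup E] [Module ℝ E] (f : E → EReal) : Prop :=
  ∀ x1 x2 : E, ∀ a b : ℝ, 0 ≤ a → 0 ≤ b → a + b = 1 →
    f (a • x1 + b • x2) ≤ (a : EReal) * f x1 + (b : EReal) * f x2


section AuxLemmas

lemma scalar_ineq (μ η l α A B S DE SD ES SV V : ℝ) (hη : 0 < η) (hl : 0 < l) (hα : 0 < α)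
    (hμ : 0 < μ) (hημ : η*μ ≤ 1/2) (hηl : 2*α*η ≤ l)
    (hB : 0 ≤ B) (hS : 0 ≤ S) (hyoung : 0 ≤ μ^2*B + 2*μ*ES + S) :
    1/η * (A + (η*μ)^2*B + η^2*S + 2*(η*μ)*DE - 2*η*SD - 2*η^2*μ*ES)
      ≤ 1/η*A - μ*A + μ*(A + 2*DE + B) - 2*SD
        + (l/α)*(S + 2*l⁻¹*SV + l⁻¹^2*V) - (1/α)*l⁻¹*V - (2/α)*SV := by
  have t1 : 0 ≤ μ*(1-2*(η*μ))*B := mul_nonneg (mul_nonneg (by positivity) (by linarith)) hB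
  have t2 : 0 ≤ (l/α-2*η)*S := by
    apply mul_nonneg _ hS
    rw [sub_nonneg, le_div_iff₀ hα]; linarith
  have t3 : 0 ≤ η*(μ^2*B + 2*μ*ES + S) := mul_nonneg hη.le hyoung
  have diff : (1/η*A - μ*A + μ*(A + 2*DE + B) - 2*SD
        + (l/α)*(S + 2*l⁻¹*SV + l⁻¹^2*V) - (1/α)*l⁻¹*V - (2/α)*SV)
      - 1/η * (A + (η*μ)^2*B + η^2*S + 2*(η*μ)*DE - 2*η*SD - 2*η^2*μ*ES)
      = μ*(1-2*(η*μ))*B/2 + μ*(1-2*(η*μ))*B/2 + (l/α-2*η)*S + η*(μ^2*B + 2*μ*ES + S) := by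
    field_simp
    ring
  linarith

section InnerAux
variable {E : Type*} [NormedAddCommGroup E] [InnerProductSpace ℝ E]

lemma coordbound (μ η l α : ℝ) (hη : 0 < η) (hl : 0 < l) (hα : 0 < α)
    (hημ : η * μ ≤ 1/2) (hηl : 2 * α * η ≤ l) (hμ : 0 < μ)
    (d e c s : E) :
    1/η * ‖d + (η*μ) • e - η • s‖^2
      ≤ 1/η * ‖d‖^2 - μ*‖d‖^2 + μ*‖d+e‖^2 - 2*⟪s,d⟫
        + (l/α) * ‖s + l⁻¹ • (e + (1-α) • c)‖^2
        - (1/α) * l⁻¹ * ‖e + (1-α) • c‖^2 - (2/α) * ⟪s, e + (1-α) • c⟫ := by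
  have key1 : ‖d + (η*μ) • e - η • s‖^2
      = ‖d‖^2 + (η*μ)^2*‖e‖^2 + η^2*‖s‖^2 + 2*(η*μ)*⟪d,e⟫ - 2*η*⟪s,d⟫ - 2*η^2*μ*⟪e,s⟫ := by
    rw [show d + (η*μ) • e - η • s = d + ((η*μ) • e - η • s) by abel, norm_add_sq_real,
      norm_sub_sq_real, inner_sub_right, real_inner_smul_right, real_inner_smul_right,
      norm_smul, norm_smul, real_inner_smul_left, real_inner_smul_right, real_inner_comm s e,
      real_inner_comm d s]
    simp only [Real.norm_eq_abs, abs_of_pos hη, abs_of_pos (mul_pos hη hμ)]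
    ring
  have key2 : ‖d+e‖^2 = ‖d‖^2 + 2*⟪d,e⟫ + ‖e‖^2 := by rw [norm_add_sq_real]
  have key3 : ‖s + l⁻¹ • (e + (1-α) • c)‖^2
      = ‖s‖^2 + 2*l⁻¹*⟪s, e + (1-α) • c⟫ + l⁻¹^2*‖e + (1-α) • c‖^2 := by
    rw [norm_add_sq_real, real_inner_smul_right, norm_smul, Real.norm_eq_abs,
      abs_of_pos (by positivity : (0:ℝ) < l⁻¹)]; ring
  have young : 0 ≤ μ^2*‖e‖^2 + 2*μ*⟪e,s⟫ + ‖s‖^2 := by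
    have h := sq_nonneg ‖μ • e + s‖
    rw [norm_add_sq_real, real_inner_smul_left, norm_smul, Real.norm_eq_abs, abs_of_pos hμ,
      mul_pow] at h
    linarith
  rw [key1, key2, key3]
  exact scalar_ineq μ η l α (‖d‖^2) (‖e‖^2) (‖s‖^2) ⟪d,e⟫ ⟪s,d⟫ ⟪e,s⟫
    ⟪s, e + (1-α) • c⟫ (‖e + (1-α) • c‖^2) hη hl hα hμ hημ hηl (sq_nonneg _) (sq_nonneg _) young
end InnerAux

set_option maxHeartbeats 1000000 in
lemma onestep {E F : Type*} [NormedAddCommGroup E] [InnerProductSpace ℝ E]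
    [NormedAddCommGroup F] [InnerProductSpace ℝ F]
    (μ1 μ2 η1 η2 l1 l2 α ρ : ℝ)
    (hμ1 : 0 < μ1) (hμ2 : 0 < μ2) (hη1 : 0 < η1) (hη2 : 0 < η2)
    (hl1 : 0 < l1) (hl2 : 0 < l2) (hα : 0 < α) (hα1 : α ≤ 1)
    (hημ1 : η1 * μ1 ≤ 1/2) (hημ2 : η2 * μ2 ≤ 1/2)
    (hηl1 : 2 * α * η1 ≤ l1) (hηl2 : 2 * α * η2 ≤ l2)
    (hρ1 : ρ ≤ η1 * μ1) (hρ2 : ρ ≤ η2 * μ2) (hρα : ρ ≤ α)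
    (u u' f1 f1' g1 us s : E) (v v' f2 f2' g2 vs t : F)
    (pf pf' ps : ℝ)
    (hg1 : g1 = α • u + (1 - α) • f1) (hg2 : g2 = α • v + (1 - α) • f2)
    (hu' : u' = u + (η1 * μ1) • (f1' - u) - η1 • s)
    (hv' : v' = v + (η2 * μ2) • (f2' - v) - η2 • t)
    (hstar : l1 * ‖s + l1⁻¹ • (f1' - g1)‖^2 + l2 * ‖t + l2⁻¹ • (f2' - g2)‖^2
        ≤ l1⁻¹ * ‖f1' - g1‖^2 + l2⁻¹ * ‖f2' - g2‖^2)
    (hSCs : ⟪s, us - f1'⟫ + ⟪t, vs - f2'⟫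
        ≤ ps - pf' - μ1/2 * ‖us - f1'‖^2 - μ2/2 * ‖vs - f2'‖^2)
    (hSCf : ⟪s, f1 - f1'⟫ + ⟪t, f2 - f2'⟫ ≤ pf - pf')
    (hpf : ps ≤ pf) :
    1/η1 * ‖u' - us‖^2 + 1/η2 * ‖v' - vs‖^2 + 2/α * (pf' - ps)
      ≤ (1 - ρ) * (1/η1 * ‖u - us‖^2 + 1/η2 * ‖v - vs‖^2 + 2/α * (pf - ps)) := by
  have he1 : f1' - g1 = (f1' - u) + (1-α) • (u - f1) := by
    rw [hg1]; module
  have cb1 := coordbound μ1 η1 l1 α hη1 hl1 hα hημ1 hηl1 hμ1 (u - us) (f1' - u) (u - f1) s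
  rw [← he1, show u - us + (f1' - u) = f1' - us by abel] at cb1
  have hd1 : u' - us = u - us + (η1*μ1) • (f1' - u) - η1 • s := by rw [hu']; abel
  rw [← hd1] at cb1
  have cb2 := coordbound μ2 η2 l2 α hη2 hl2 hα hημ2 hηl2 hμ2 (v - vs) (f2' - v) (v - f2) t
  have he2 : f2' - g2 = (f2' - v) + (1-α) • (v - f2) := by rw [hg2]; module
  rw [← he2, show v - vs + (f2' - v) = f2' - vs by abel] at cb2
  have hd2 : v' - vs = v - vs + (η2*μ2) • (f2' - v) - η2 • t := by rw [hv']; abel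
  rw [← hd2] at cb2
  have i1 : ⟪s, u - us⟫ = -⟪s, us - f1'⟫ - ⟪s, f1' - u⟫ := by
    rw [show u - us = -(us - f1') - (f1' - u) from by abel, inner_sub_right, inner_neg_right]
  have i2 : ⟪t, v - vs⟫ = -⟪t, vs - f2'⟫ - ⟪t, f2' - v⟫ := by
    rw [show v - vs = -(vs - f2') - (f2' - v) from by abel, inner_sub_right, inner_neg_right]
  have j1 : α * ⟪s, f1' - u⟫ = (1-α) * ⟪s, f1 - f1'⟫ + ⟪s, f1' - g1⟫ := by
    have e : (α:ℝ) • (f1' - u) = (1-α) • (f1 - f1') + (f1' - g1) := by rw [hg1]; module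
    calc α * ⟪s, f1' - u⟫ = ⟪s, (α:ℝ) • (f1' - u)⟫ := (real_inner_smul_right _ _ _).symm
      _ = ⟪s, (1-α) • (f1 - f1') + (f1' - g1)⟫ := by rw [e]
      _ = (1-α) * ⟪s, f1 - f1'⟫ + ⟪s, f1' - g1⟫ := by
          rw [inner_add_right, real_inner_smul_right]
  have j2 : α * ⟪t, f2' - v⟫ = (1-α) * ⟪t, f2 - f2'⟫ + ⟪t, f2' - g2⟫ := by
    have e : (α:ℝ) • (f2' - v) = (1-α) • (f2 - f2') + (f2' - g2) := by rw [hg2]; module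
    calc α * ⟪t, f2' - v⟫ = ⟪t, (α:ℝ) • (f2' - v)⟫ := (real_inner_smul_right _ _ _).symm
      _ = ⟪t, (1-α) • (f2 - f2') + (f2' - g2)⟫ := by rw [e]
      _ = (1-α) * ⟪t, f2 - f2'⟫ + ⟪t, f2' - g2⟫ := by
          rw [inner_add_right, real_inner_smul_right]
  have j1' : 2 * ⟪s, f1' - u⟫
      = (2/α - 2) * ⟪s, f1 - f1'⟫ + 2/α * ⟪s, f1' - g1⟫ := by
    have hαne : α ≠ 0 := hα.ne'
    field_simp
    linear_combination j1
  have j2' : 2 * ⟪t, f2' - v⟫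
      = (2/α - 2) * ⟪t, f2 - f2'⟫ + 2/α * ⟪t, f2' - g2⟫ := by
    have hαne : α ≠ 0 := hα.ne'
    field_simp
    linear_combination j2
  have hstar' : (1/α) * (l1 * ‖s + l1⁻¹ • (f1' - g1)‖^2 + l2 * ‖t + l2⁻¹ • (f2' - g2)‖^2)
      ≤ (1/α) * (l1⁻¹ * ‖f1' - g1‖^2 + l2⁻¹ * ‖f2' - g2‖^2) :=
    mul_le_mul_of_nonneg_left hstar (by positivity)
  have hSCf' : (2/α - 2) * (⟪s, f1 - f1'⟫ + ⟪t, f2 - f2'⟫) ≤ (2/α - 2) * (pf - pf') := by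
    apply mul_le_mul_of_nonneg_left hSCf
    have h2 : (2:ℝ)*α ≤ 2 := by linarith
    rw [sub_nonneg, le_div_iff₀ hα]; linarith
  have hn1 : ‖f1' - us‖^2 = ‖us - f1'‖^2 := by
    rw [show f1' - us = -(us - f1') from by abel, norm_neg]
  have hn2 : ‖f2' - vs‖^2 = ‖vs - f2'‖^2 := by
    rw [show f2' - vs = -(vs - f2') from by abel, norm_neg]
  rw [← hn1, ← hn2] at hSCs
  have c1 : (1/η1 - μ1) * ‖u - us‖^2 ≤ (1-ρ)/η1 * ‖u - us‖^2 := by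
    apply mul_le_mul_of_nonneg_right _ (sq_nonneg _)
    rw [le_div_iff₀ hη1, sub_mul, one_div_mul_cancel hη1.ne']
    nlinarith
  have c2 : (1/η2 - μ2) * ‖v - vs‖^2 ≤ (1-ρ)/η2 * ‖v - vs‖^2 := by
    apply mul_le_mul_of_nonneg_right _ (sq_nonneg _)
    rw [le_div_iff₀ hη2, sub_mul, one_div_mul_cancel hη2.ne']
    nlinarith
  have c3 : (2/α - 2) * (pf - ps) ≤ (1-ρ)*(2/α) * (pf - ps) := by
    apply mul_le_mul_of_nonneg_right _ (by linarith)
    calc 2/α - 2 = (1-α)*(2/α) := by field_simp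
      _ ≤ (1-ρ)*(2/α) := mul_le_mul_of_nonneg_right (by linarith) (by positivity)
  ring_nf at cb1 cb2 hstar' hSCf' c1 c2 c3 i1 i2 j1' j2' hSCs ⊢
  linarith [cb1, cb2, hstar', hSCf', c1, c2, c3, i1, i2, j1', j2', hSCs]

section ConjAux
variable {E F : Type*} [NormedAddCommGroup E] [InnerProductSpace ℝ E]
  [NormedAddCommGroup F] [InnerProductSpace ℝ F]

lemma conj_value (r : E → EReal) (g : F → EReal) (Fh : E → F → ℝ)
    (hrbot : ∀ x, r x ≠ ⊥) (hgbot : ∀ y, g y ≠ ⊥)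
    (z x q : E) (y : F)
    (hq : ∀ x' : E, Fh x y + ⟪q, x' - x⟫ ≤ Fh x' y)
    (hsub : z - q ∈ SubdiffAt r x) (hglt : g y < ⊤) :
    conjG r g Fh z y = ((⟪x, z⟫ - (r x).toReal - Fh x y + (g y).toReal : ℝ) : EReal) := by
  obtain ⟨hrlt, hrineq⟩ := hsub
  have hrx : ((r x).toReal : EReal) = r x := EReal.coe_toReal hrlt.ne (hrbot x)
  have hgy : ((g y).toReal : EReal) = g y := EReal.coe_toReal hglt.ne (hgbot y)
  apply le_antisymm
  · apply iSup_le
    intro x'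
    by_cases hT : r x' = ⊤
    · rw [hT]
      have h1 : ((⟪x', z⟫:ℝ):EReal) - ⊤ = ⊥ := by simp
      rw [h1]
      have h2 : (⊥:EReal) - ((Fh x' y : ℝ):EReal) = ⊥ := by simp
      rw [h2, ← hgy]
      simp
    · have hrx' : ((r x').toReal : EReal) = r x' := EReal.coe_toReal hT (hrbot x')
      rw [← hrx', ← hgy, ← EReal.coe_sub, ← EReal.coe_sub, ← EReal.coe_add, EReal.coe_le_coe_iff]
      have h3 := hrineq x'
      rw [← hrx, ← hrx', ← EReal.coe_add, EReal.coe_le_coe_iff] at h3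
      have h4 := hq x'
      have h5 : ⟪z - q, x' - x⟫ = ⟪z, x' - x⟫ - ⟪q, x' - x⟫ := inner_sub_left _ _ _
      have h6 : ⟪z, x' - x⟫ = ⟪x', z⟫ - ⟪x, z⟫ := by
        rw [inner_sub_right, real_inner_comm z x', real_inner_comm z x]
      simp only [EReal.toReal_coe]
      linarith
  · have hle := le_iSup
      (fun x0 => (((⟪x0, z⟫ : ℝ) : EReal) - r x0 - ((Fh x0 y : ℝ) : EReal) + g y)) x
    refine le_trans (le_of_eq ?_) hle
    rw [← hrx, ← hgy, ← EReal.coe_sub, ← EReal.coe_sub, ← EReal.coe_add]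
    simp only [EReal.toReal_coe]

lemma conj_subgrad (r : E → EReal) (g : F → EReal) (Fh : E → F → ℝ)
    (hrbot : ∀ x, r x ≠ ⊥) (hgbot : ∀ y, g y ≠ ⊥)
    (z x : E) (y w qy : F)
    (hqy : ∀ y' : F, Fh x y' ≤ Fh x y + ⟪qy, y' - y⟫)
    (hrlt : r x < ⊤)
    (hsubg : w + qy ∈ SubdiffAt g y)
    (z' : E) (y' : F) :
    ((⟪x, z⟫ - (r x).toReal - Fh x y + (g y).toReal + ⟪x, z' - z⟫ + ⟪w, y' - y⟫ : ℝ) : EReal)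
      ≤ conjG r g Fh z' y' := by
  obtain ⟨hglt, hgineq⟩ := hsubg
  have hrx : ((r x).toReal : EReal) = r x := EReal.coe_toReal hrlt.ne (hrbot x)
  have hgy : ((g y).toReal : EReal) = g y := EReal.coe_toReal hglt.ne (hgbot y)
  have hle := le_iSup
    (fun x0 => (((⟪x0, z'⟫ : ℝ) : EReal) - r x0 - ((Fh x0 y' : ℝ) : EReal) + g y')) x
  refine le_trans ?_ hle
  by_cases hT : g y' = ⊤
  · rw [hT, ← hrx, ← EReal.coe_sub, ← EReal.coe_sub, EReal.coe_add_top]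
    exact le_top
  · have hgy' : ((g y').toReal : EReal) = g y' := EReal.coe_toReal hT (hgbot y')
    rw [← hrx, ← hgy', ← EReal.coe_sub, ← EReal.coe_sub, ← EReal.coe_add, EReal.coe_le_coe_iff]
    have h1 := hgineq y'
    rw [← hgy, ← hgy', ← EReal.coe_add, EReal.coe_le_coe_iff] at h1
    have h2 := hqy y'
    have h3 : ⟪w + qy, y' - y⟫ = ⟪w, y' - y⟫ + ⟪qy, y' - y⟫ := inner_add_left _ _ _
    have h4 : ⟪x, z' - z⟫ = ⟪x, z'⟫ - ⟪x, z⟫ := inner_sub_right _ _ _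
    simp only [EReal.toReal_coe]
    linarith

lemma Fh_conv (F0 : E → F → ℝ) (gFx : E → F → E) (μx μy : ℝ) (Fh : E → F → ℝ)
    (hFh : ∀ x y, Fh x y = F0 x y - μx / 2 * ‖x‖ ^ 2 + μy / 2 * ‖y‖ ^ 2)
    (hconv : ∀ x1 x2 y, F0 x2 y ≥ F0 x1 y + ⟪gFx x1 y, x2 - x1⟫ + μx / 2 * ‖x2 - x1‖ ^ 2)
    (x x' : E) (y : F) :
    Fh x y + ⟪gFx x y - μx • x, x' - x⟫ ≤ Fh x' y := by
  have h := hconv x x' y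
  have h2 := norm_add_sq_real x (x' - x)
  rw [show x + (x' - x) = x' from by abel] at h2
  have h2' : μx/2 * ‖x'‖^2 = μx/2 * ‖x‖^2 + μx * ⟪x, x' - x⟫ + μx/2 * ‖x' - x‖^2 := by
    rw [h2]; ring
  rw [hFh, hFh, inner_sub_left, real_inner_smul_left]
  linarith

lemma Fh_conc (F0 : E → F → ℝ) (gFy : E → F → F) (μx μy : ℝ) (Fh : E → F → ℝ)
    (hFh : ∀ x y, Fh x y = F0 x y - μx / 2 * ‖x‖ ^ 2 + μy / 2 * ‖y‖ ^ 2)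
    (hconc : ∀ x y1 y2, F0 x y2 ≤ F0 x y1 + ⟪gFy x y1, y2 - y1⟫ - μy / 2 * ‖y2 - y1‖ ^ 2)
    (x : E) (y y' : F) :
    Fh x y' ≤ Fh x y + ⟪gFy x y + μy • y, y' - y⟫ := by
  have h := hconc x y y'
  have h2 := norm_add_sq_real y (y' - y)
  rw [show y + (y' - y) = y' from by abel] at h2
  have h2' : μy/2 * ‖y'‖^2 = μy/2 * ‖y‖^2 + μy * ⟪y, y' - y⟫ + μy/2 * ‖y' - y‖^2 := by
    rw [h2]; ring
  rw [hFh, hFh, inner_add_left, real_inner_smul_left]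
  linarith

lemma inexact_scalar (μx ν θy τ D V I T Y : ℝ) (hμx : 0 < μx) (hν : μx*ν = 1)
    (hD : 0 ≤ D)
    (h : (8/μx)*((μx/2)^2*D) + θy*T ≤ (μx/8)*(D - 2*(2*ν)*I + (2*ν)^2*V) + τ*Y)
    (n3 : 0 ≤ D + 2*(2*ν)*I + (2*ν)^2*V) :
    μx*D + θy*T ≤ ν*V + τ*Y := by
  have hc : (8/μx)*((μx/2)^2*D) = 2*μx*D := by field_simp; ring
  have hsub : μx*((2*ν)^2*V) = 4*(ν*V) := by linear_combination (4*ν*V)*hν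
  have hn3' : 0 ≤ (μx/8)*(D + 2*(2*ν)*I + (2*ν)^2*V) :=
    mul_nonneg (by positivity) n3
  have hmD : 0 ≤ μx*D := mul_nonneg hμx.le hD
  rw [hc] at h
  ring_nf at h hn3' hsub hmD ⊢
  linarith

lemma inexact_to_star (μx θy μy : ℝ) (hμx : 0 < μx) (hθy : 0 < θy)
    (xf zf zg : E) (wf yf yg : F)
    (h : (8 / μx) * ‖zf + (μx / 2) • (xf - μx⁻¹ • zg)‖ ^ 2
          + θy * ‖wf + μy • yf + θy⁻¹ • (yf - yg)‖ ^ 2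
        ≤ (μx / 8) * ‖xf + μx⁻¹ • zg‖ ^ 2 + θy⁻¹ * ‖yf - yg‖ ^ 2) :
    μx * ‖(xf + μx⁻¹ • zf) + μx⁻¹ • (zf - zg)‖ ^ 2
      + θy * ‖(wf + μy • yf) + θy⁻¹ • (yf - yg)‖ ^ 2
      ≤ μx⁻¹ * ‖zf - zg‖ ^ 2 + θy⁻¹ * ‖yf - yg‖ ^ 2 := by
  set d : E := (xf + μx⁻¹ • zf) + μx⁻¹ • (zf - zg) with hd
  have e1 : zf + (μx / 2) • (xf - μx⁻¹ • zg) = (μx/2) • d := by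
    rw [hd]; match_scalars <;> field_simp <;> ring
  have e2 : xf + μx⁻¹ • zg = d - (2*μx⁻¹) • (zf - zg) := by
    rw [hd]; match_scalars <;> field_simp <;> ring
  have e3 : wf + μy • yf + θy⁻¹ • (yf - yg) = (wf + μy • yf) + θy⁻¹ • (yf - yg) := by abel
  rw [e1, e2, e3] at h
  have n1 : ‖(μx/2) • d‖^2 = (μx/2)^2 * ‖d‖^2 := by
    rw [norm_smul, Real.norm_eq_abs, abs_of_pos (by positivity : (0:ℝ) < μx/2), mul_pow]
  have n2 : ‖d - (2*μx⁻¹) • (zf - zg)‖^2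
      = ‖d‖^2 - 2*(2*μx⁻¹)*⟪d, zf - zg⟫ + (2*μx⁻¹)^2*‖zf - zg‖^2 := by
    rw [norm_sub_sq_real, real_inner_smul_right, norm_smul, Real.norm_eq_abs,
      abs_of_pos (by positivity : (0:ℝ) < 2*μx⁻¹), mul_pow]; ring
  have n3 : 0 ≤ ‖d‖^2 + 2*(2*μx⁻¹)*⟪d, zf - zg⟫ + (2*μx⁻¹)^2*‖zf - zg‖^2 := by
    have h0 := sq_nonneg ‖d + (2*μx⁻¹) • (zf - zg)‖
    rw [norm_add_sq_real, real_inner_smul_right, norm_smul, Real.norm_eq_abs,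
      abs_of_pos (by positivity : (0:ℝ) < 2*μx⁻¹), mul_pow] at h0
    linarith
  rw [n1, n2] at h
  exact inexact_scalar μx μx⁻¹ θy θy⁻¹ (‖d‖^2) (‖zf - zg‖^2) (⟪d, zf - zg⟫)
    (‖wf + μy • yf + θy⁻¹ • (yf - yg)‖^2) (‖yf - yg‖^2) hμx
    (mul_inv_cancel₀ hμx.ne') (sq_nonneg _) (by linarith [h]) n3

lemma P_subgrad (μx μy : ℝ) (hμx : 0 < μx)
    (r : E → EReal) (g : F → EReal) (Fh : E → F → ℝ)
    (hrbot : ∀ x, r x ≠ ⊥) (hgbot : ∀ y, g y ≠ ⊥)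
    (z x q : E) (y w qy : F)
    (hq : ∀ x' : E, Fh x y + ⟪q, x' - x⟫ ≤ Fh x' y)
    (hqy : ∀ y' : F, Fh x y' ≤ Fh x y + ⟪qy, y' - y⟫)
    (hsub : z - q ∈ SubdiffAt r x)
    (hsubg : w + qy ∈ SubdiffAt g y)
    (z' : E) (y' : F) (c' : ℝ) (hc' : conjG r g Fh z' y' = (c' : EReal)) :
    1/(2*μx)*‖z‖^2 + μy/2*‖y‖^2 + (conjG r g Fh z y).toReal
      + ⟪x + μx⁻¹ • z, z' - z⟫ + ⟪w + μy • y, y' - y⟫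
      + μx⁻¹/2 * ‖z' - z‖^2 + μy/2 * ‖y' - y‖^2
    ≤ 1/(2*μx)*‖z'‖^2 + μy/2*‖y'‖^2 + c' := by
  have hval := conj_value r g Fh hrbot hgbot z x q y hq hsub hsubg.1
  have hsg := conj_subgrad r g Fh hrbot hgbot z x y w qy hqy hsub.1 hsubg z' y'
  rw [hc', EReal.coe_le_coe_iff] at hsg
  rw [hval, EReal.toReal_coe]
  have hz := norm_add_sq_real z (z' - z)
  rw [show z + (z' - z) = z' from by abel] at hz
  have hz' : 1/(2*μx)*‖z'‖^2 = 1/(2*μx)*‖z‖^2 + μx⁻¹*⟪z, z' - z⟫ + μx⁻¹/2*‖z' - z‖^2 := by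
    rw [hz]; field_simp
  have hy := norm_add_sq_real y (y' - y)
  rw [show y + (y' - y) = y' from by abel] at hy
  have hy' : μy/2*‖y'‖^2 = μy/2*‖y‖^2 + μy*⟪y, y' - y⟫ + μy/2*‖y' - y‖^2 := by
    rw [hy]; ring
  have hi1 : ⟪x + μx⁻¹ • z, z' - z⟫ = ⟪x, z' - z⟫ + μx⁻¹*⟪z, z' - z⟫ := by
    rw [inner_add_left, real_inner_smul_left]
  have hi2 : ⟪w + μy • y, y' - y⟫ = ⟪w, y' - y⟫ + μy*⟪y, y' - y⟫ := by
    rw [inner_add_left, real_inner_smul_left]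
  linarith
end ConjAux

end AuxLemmas

set_option maxHeartbeats 2000000 in
/-- Theorem `pp:thm` in the paper. Linear convergence of the accelerated
proximal point algorithm (Algorithm 2) with inexact proximal steps: with
`η_z = μₓ/2`, `η_y = min{1/(2μ_y), θ_y/(2α)}` and `ρ = 1/max{2/α, 2α/(θ_y μ_y)}`, the iterates
contract at rate `(1 − ρ)` with respect to the Lyapunov function `L⁰`, and in particular
`‖(−μₓ⁻¹ z^K) − x*‖² + ‖y^K − y*‖² ≤ max{η_z μₓ⁻², η_y} · L⁰ · (1 − ρ)^K`. -/
theorem stmt_0 {dx dy : ℕ}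
    (F : EuclideanSpace ℝ (Fin dx) → EuclideanSpace ℝ (Fin dy) → ℝ)
    (gFx : EuclideanSpace ℝ (Fin dx) → EuclideanSpace ℝ (Fin dy) → EuclideanSpace ℝ (Fin dx))
    (gFy : EuclideanSpace ℝ (Fin dx) → EuclideanSpace ℝ (Fin dy) → EuclideanSpace ℝ (Fin dy))
    (μx μy : ℝ) (hμx : 0 < μx) (hμy : 0 < μy)
    (hgFx : ∀ x y, HasGradientAt (fun x' => F x' y) (gFx x y) x)
    (hgFy : ∀ x y, HasGradientAt (fun y' => F x y') (gFy x y) y)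
    (hconv : ∀ x1 x2 y, F x2 y ≥ F x1 y + ⟪gFx x1 y, x2 - x1⟫ + μx / 2 * ‖x2 - x1‖ ^ 2)
    (hconc : ∀ x y1 y2, F x y2 ≤ F x y1 + ⟪gFy x y1, y2 - y1⟫ - μy / 2 * ‖y2 - y1‖ ^ 2)
    (r : EuclideanSpace ℝ (Fin dx) → EReal) (g : EuclideanSpace ℝ (Fin dy) → EReal)
    (hrbot : ∀ x, r x ≠ ⊥) (hgbot : ∀ y, g y ≠ ⊥)
    (hrproper : ∃ x, r x ≠ ⊤) (hgproper : ∃ y, g y ≠ ⊤)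
    (hrconv : ERealConvexOn r) (hgconv : ERealConvexOn g)
    (hrlsc : LowerSemicontinuous r) (hglsc : LowerSemicontinuous g)
    (Fh : EuclideanSpace ℝ (Fin dx) → EuclideanSpace ℝ (Fin dy) → ℝ)
    (hFh : ∀ x y, Fh x y = F x y - μx / 2 * ‖x‖ ^ 2 + μy / 2 * ‖y‖ ^ 2)
    -- parameters of the algorithm
    (α θy ηz ηy : ℝ) (hα0 : 0 < α) (hα1 : α ≤ 1) (hθy : 0 < θy)
    (hηz : ηz = μx / 2) (hηy : ηy = min (1 / (2 * μy)) (θy / (2 * α)))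
    (K : ℕ)
    (z zf zg xf : ℕ → EuclideanSpace ℝ (Fin dx))
    (y yf yg wf : ℕ → EuclideanSpace ℝ (Fin dy))
    (hzg : ∀ k < K, zg k = α • z k + (1 - α) • zf k)
    (hyg : ∀ k < K, yg k = α • y k + (1 - α) • yf k)
    -- `z_f^{k+1} − ∇ₓ F̂(x_f^{k+1}, y_f^{k+1}) ∈ ∂r(x_f^{k+1})`,
    -- with `∇ₓ F̂(x, y) = ∇ₓ F(x, y) − μx x`
    (hincr : ∀ k < K,
      zf (k + 1) - (gFx (xf (k + 1)) (yf (k + 1)) - μx • xf (k + 1))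
        ∈ SubdiffAt r (xf (k + 1)))
    -- `w_f^{k+1} + ∇_y F̂(x_f^{k+1}, y_f^{k+1}) ∈ ∂g(y_f^{k+1})`,
    -- with `∇_y F̂(x, y) = ∇_y F(x, y) + μy y`
    (hincg : ∀ k < K,
      wf (k + 1) + (gFy (xf (k + 1)) (yf (k + 1)) + μy • yf (k + 1))
        ∈ SubdiffAt g (yf (k + 1)))
    (hinexact : ∀ k < K,
      (8 / μx) * ‖zf (k + 1) + (μx / 2) • (xf (k + 1) - μx⁻¹ • zg k)‖ ^ 2
          + θy * ‖wf (k + 1) + μy • yf (k + 1) + θy⁻¹ • (yf (k + 1) - yg k)‖ ^ 2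
        ≤ (μx / 8) * ‖xf (k + 1) + μx⁻¹ • zg k‖ ^ 2 + θy⁻¹ * ‖yf (k + 1) - yg k‖ ^ 2)
    (hzstep : ∀ k < K, z (k + 1)
        = z k + (ηz * μx⁻¹) • (zf (k + 1) - z k) - ηz • (xf (k + 1) + μx⁻¹ • zf (k + 1)))
    (hystep : ∀ k < K, y (k + 1)
        = y k + (ηy * μy) • (yf (k + 1) - y k) - ηy • (wf (k + 1) + μy • yf (k + 1)))
    -- the saddle point and its optimality conditions
    (xstar : EuclideanSpace ℝ (Fin dx)) (ystar : EuclideanSpace ℝ (Fin dy))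
    (hoptx : -(gFx xstar ystar) ∈ SubdiffAt r xstar)
    (hopty : gFy xstar ystar ∈ SubdiffAt g ystar)
    (zstar : EuclideanSpace ℝ (Fin dx)) (hzstar : zstar = -(μx • xstar))
    (hP0 : Pfun μx μy r g Fh (zf 0) (yf 0) < ⊤)
    (ρ : ℝ) (hρ : ρ = 1 / max (2 / α) (2 * α / (θy * μy)))
    (L0 : EReal)
    (hL0 : L0 = (((1 / ηz) * ‖z 0 - zstar‖ ^ 2 + (1 / ηy) * ‖y 0 - ystar‖ ^ 2 : ℝ) : EReal)
        + ((2 / α : ℝ) : EReal) *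
            (Pfun μx μy r g Fh (zf 0) (yf 0) - Pfun μx μy r g Fh zstar ystar)) :
    (((1 / ηz) * ‖z K - zstar‖ ^ 2 + (1 / ηy) * ‖y K - ystar‖ ^ 2 : ℝ) : EReal)
        ≤ (((1 - ρ) ^ K : ℝ) : EReal) * L0
    ∧ ((‖(-μx⁻¹) • z K - xstar‖ ^ 2 + ‖y K - ystar‖ ^ 2 : ℝ) : EReal)
        ≤ ((max (ηz * (μx⁻¹) ^ 2) ηy : ℝ) : EReal) * L0 * (((1 - ρ) ^ K : ℝ) : EReal) := by
    classical
  -- positivity of step sizes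
  have hηzpos : 0 < ηz := by rw [hηz]; positivity
  have hηypos : 0 < ηy := by
    rw [hηy]; exact lt_min (by positivity) (by positivity)
  have hμxinv : 0 < μx⁻¹ := by positivity
  -- facts about ρ
  have hmax1 : (0:ℝ) < 2/α := by positivity
  have hmaxpos : 0 < max (2/α) (2*α/(θy*μy)) := lt_of_lt_of_le hmax1 (le_max_left _ _)
  have hρpos : 0 < ρ := by rw [hρ]; exact div_pos one_pos hmaxpos
  have hρa2 : ρ ≤ α/2 := by
    rw [hρ]
    calc 1 / max (2/α) (2*α/(θy*μy)) ≤ 1/(2/α) :=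
          one_div_le_one_div_of_le hmax1 (le_max_left _ _)
      _ = α/2 := one_div_div 2 α
  have hρb : ρ ≤ θy*μy/(2*α) := by
    rw [hρ]
    calc 1 / max (2/α) (2*α/(θy*μy)) ≤ 1/(2*α/(θy*μy)) :=
          one_div_le_one_div_of_le (by positivity) (le_max_right _ _)
      _ = θy*μy/(2*α) := one_div_div _ _
  have hρhalf : ρ ≤ 1/2 := le_trans hρa2 (by linarith)
  -- facts about η
  have hμz2 : (μx/2)*μx⁻¹ = 1/2 := by field_simp
  have hημ1 : ηz * μx⁻¹ ≤ 1/2 := by rw [hηz, hμz2]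
  have hημyeq : ηy * μy = min (1/2) (θy*μy/(2*α)) := by
    rcases le_total (1/(2*μy)) (θy/(2*α)) with h | h
    · rw [hηy, min_eq_left h]
      rw [min_eq_left, one_div, one_div]
      · field_simp
        try ring
      · calc (1:ℝ)/2 = 1/(2*μy)*μy := by field_simp; try ring
          _ ≤ θy/(2*α)*μy := mul_le_mul_of_nonneg_right h hμy.le
          _ = θy*μy/(2*α) := by ring
    · rw [hηy, min_eq_right h]
      rw [min_eq_right, show θy/(2*α)*μy = θy*μy/(2*α) from by ring]
      calc θy*μy/(2*α) = θy/(2*α)*μy := by ring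
        _ ≤ 1/(2*μy)*μy := mul_le_mul_of_nonneg_right h hμy.le
        _ = 1/2 := by field_simp; try ring
  have hημ2 : ηy * μy ≤ 1/2 := by rw [hημyeq]; exact min_le_left _ _
  have hηl1 : 2*α*ηz ≤ μx := by rw [hηz]; nlinarith
  have hηl2 : 2*α*ηy ≤ θy := by
    have h1 : ηy ≤ θy/(2*α) := by rw [hηy]; exact min_le_right _ _
    calc 2*α*ηy ≤ 2*α*(θy/(2*α)) := mul_le_mul_of_nonneg_left h1 (by positivity)
      _ = θy := by field_simp
  have hρ1 : ρ ≤ ηz * μx⁻¹ := by rw [hηz, hμz2]; exact hρhalf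
  have hρ2 : ρ ≤ ηy * μy := by rw [hημyeq]; exact le_min hρhalf hρb
  have hρα : ρ ≤ α := by linarith
  -- convexity/concavity of F̂
  have hq := fun (x0 x1 : EuclideanSpace ℝ (Fin dx)) (y0 : EuclideanSpace ℝ (Fin dy)) =>
    Fh_conv F gFx μx μy Fh hFh hconv x0 x1 y0
  have hqy := fun (x0 : EuclideanSpace ℝ (Fin dx)) (y0 y1 : EuclideanSpace ℝ (Fin dy)) =>
    Fh_conc F gFy μx μy Fh hFh hconc x0 y0 y1
  -- saddle point certificates
  have hstar_r : zstar - (gFx xstar ystar - μx • xstar) ∈ SubdiffAt r xstar := by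
    have e : zstar - (gFx xstar ystar - μx • xstar) = -(gFx xstar ystar) := by
      rw [hzstar]; abel
    rw [e]; exact hoptx
  have hstar_g : (-(μy • ystar)) + (gFy xstar ystar + μy • ystar) ∈ SubdiffAt g ystar := by
    have e : (-(μy • ystar)) + (gFy xstar ystar + μy • ystar) = gFy xstar ystar := by abel
    rw [e]; exact hopty
  have hGstar : conjG r g Fh zstar ystar
      = ((⟪xstar, zstar⟫ - (r xstar).toReal - Fh xstar ystar + (g ystar).toReal : ℝ) : EReal) :=
    conj_value r g Fh hrbot hgbot zstar xstar _ ystar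
      (fun x' => hq xstar x' ystar) hstar_r hopty.1
  have hGstar' : conjG r g Fh zstar ystar
      = (((conjG r g Fh zstar ystar).toReal : ℝ) : EReal) := by
    rw [hGstar, EReal.toReal_coe]
  -- finiteness of conjG along the iterates
  have hGfin : ∀ k, k ≤ K → conjG r g Fh (zf k) (yf k)
      = (((conjG r g Fh (zf k) (yf k)).toReal : ℝ) : EReal) := by
    intro k hk
    cases k with
    | zero =>
      have hlow := conj_subgrad r g Fh hrbot hgbot zstar xstar ystar (-(μy • ystar)) _
        (fun y' => hqy xstar ystar y') hoptx.1 hstar_g (zf 0) (yf 0)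
      have hbot : conjG r g Fh (zf 0) (yf 0) ≠ ⊥ := by
        intro hb
        rw [hb, le_bot_iff] at hlow
        exact (EReal.coe_ne_bot _) hlow
      have htop : conjG r g Fh (zf 0) (yf 0) ≠ ⊤ := by
        intro ht
        have h := hP0
        have hPdef : Pfun μx μy r g Fh (zf 0) (yf 0)
            = ((1 / (2 * μx) * ‖zf 0‖ ^ 2 + μy / 2 * ‖yf 0‖ ^ 2 : ℝ) : EReal)
              + conjG r g Fh (zf 0) (yf 0) := rfl
        rw [hPdef, ht, EReal.coe_add_top] at h
        exact lt_irrefl ⊤ h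
      exact (EReal.coe_toReal htop hbot).symm
    | succ n =>
      have hn : n < K := hk
      rw [conj_value r g Fh hrbot hgbot (zf (n+1)) (xf (n+1)) _ (yf (n+1))
        (fun x' => hq (xf (n+1)) x' (yf (n+1))) (hincr n hn) (hincg n hn).1,
        EReal.toReal_coe]
  -- P subgradient inequality at the iterates
  have hPsub : ∀ k, k < K → ∀ (z' : EuclideanSpace ℝ (Fin dx))
      (y' : EuclideanSpace ℝ (Fin dy)) (c' : ℝ),
      conjG r g Fh z' y' = (c' : EReal) →
      1/(2*μx)*‖zf (k+1)‖^2 + μy/2*‖yf (k+1)‖^2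
          + (conjG r g Fh (zf (k+1)) (yf (k+1))).toReal
        + ⟪xf (k+1) + μx⁻¹ • zf (k+1), z' - zf (k+1)⟫
        + ⟪wf (k+1) + μy • yf (k+1), y' - yf (k+1)⟫
        + μx⁻¹/2 * ‖z' - zf (k+1)‖^2 + μy/2 * ‖y' - yf (k+1)‖^2
      ≤ 1/(2*μx)*‖z'‖^2 + μy/2*‖y'‖^2 + c' := by
    intro k hk z' y' c' hc'
    exact P_subgrad μx μy hμx r g Fh hrbot hgbot (zf (k+1)) (xf (k+1)) _ (yf (k+1)) (wf (k+1)) _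
      (fun x' => hq (xf (k+1)) x' (yf (k+1))) (fun y0 => hqy (xf (k+1)) (yf (k+1)) y0)
      (hincr k hk) (hincg k hk) z' y' c' hc'
  -- P subgradient inequality at the saddle point (gradient is zero there)
  have hzero1 : xstar + μx⁻¹ • zstar = (0 : EuclideanSpace ℝ (Fin dx)) := by
    rw [hzstar]
    match_scalars
    field_simp
    ring
  have hzero2 : (-(μy • ystar)) + μy • ystar = (0 : EuclideanSpace ℝ (Fin dy)) :=
    neg_add_cancel _
  have hps_le : ∀ k, k ≤ K →
      1/(2*μx)*‖zstar‖^2 + μy/2*‖ystar‖^2 + (conjG r g Fh zstar ystar).toReal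
      ≤ 1/(2*μx)*‖zf k‖^2 + μy/2*‖yf k‖^2 + (conjG r g Fh (zf k) (yf k)).toReal := by
    intro k hk
    have h := P_subgrad μx μy hμx r g Fh hrbot hgbot zstar xstar _ ystar (-(μy • ystar)) _
      (fun x' => hq xstar x' ystar) (fun y0 => hqy xstar ystar y0) hstar_r hstar_g
      (zf k) (yf k) ((conjG r g Fh (zf k) (yf k)).toReal) (hGfin k hk)
    rw [hzero1, hzero2, inner_zero_left, inner_zero_left] at h
    have n1 : 0 ≤ μx⁻¹/2 * ‖zf k - zstar‖^2 := by positivity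
    have n2 : 0 ≤ μy/2 * ‖yf k - ystar‖^2 := by positivity
    linarith
  -- the Lyapunov function
  obtain ⟨Φ, hΦ⟩ : ∃ Φ : ℕ → ℝ, ∀ k, Φ k =
      1/ηz*‖z k - zstar‖^2 + 1/ηy*‖y k - ystar‖^2
        + 2/α*((1/(2*μx)*‖zf k‖^2 + μy/2*‖yf k‖^2
            + (conjG r g Fh (zf k) (yf k)).toReal)
          - (1/(2*μx)*‖zstar‖^2 + μy/2*‖ystar‖^2
            + (conjG r g Fh zstar ystar).toReal)) :=
    ⟨_, fun k => rfl⟩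
  -- one-step contraction
  have hstep : ∀ k, k < K → Φ (k+1) ≤ (1-ρ) * Φ k := by
    intro k hk
    rw [hΦ, hΦ]
    refine onestep μx⁻¹ μy ηz ηy μx θy α ρ hμxinv hμy hηzpos hηypos hμx hθy hα0 hα1
      hημ1 hημ2 hηl1 hηl2 hρ1 hρ2 hρα
      (z k) (z (k+1)) (zf k) (zf (k+1)) (zg k) zstar (xf (k+1) + μx⁻¹ • zf (k+1))
      (y k) (y (k+1)) (yf k) (yf (k+1)) (yg k) ystar (wf (k+1) + μy • yf (k+1))
      _ _ _
      (hzg k hk) (hyg k hk) (hzstep k hk) (hystep k hk)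
      (inexact_to_star μx θy μy hμx hθy (xf (k+1)) (zf (k+1)) (zg k)
        (wf (k+1)) (yf (k+1)) (yg k) (hinexact k hk))
      ?_ ?_ (hps_le k hk.le)
    · have h := hPsub k hk zstar ystar ((conjG r g Fh zstar ystar).toReal) hGstar'
      linarith
    · have h := hPsub k hk (zf k) (yf k)
        ((conjG r g Fh (zf k) (yf k)).toReal) (hGfin k hk.le)
      have n1 : 0 ≤ μx⁻¹/2 * ‖zf k - zf (k+1)‖^2 := by positivity
      have n2 : 0 ≤ μy/2 * ‖yf k - yf (k+1)‖^2 := by positivity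
      linarith
  -- iterate the contraction
  have hcontr : ∀ k, k ≤ K → Φ k ≤ (1-ρ)^k * Φ 0 := by
    intro k
    induction k with
    | zero => intro _; rw [pow_zero, one_mul]
    | succ n ih =>
      intro h
      have hn : n < K := h
      calc Φ (n+1) ≤ (1-ρ) * Φ n := hstep n hn
        _ ≤ (1-ρ) * ((1-ρ)^n * Φ 0) :=
            mul_le_mul_of_nonneg_left (ih hn.le) (by linarith)
        _ = (1-ρ)^(n+1) * Φ 0 := by ring
  -- Pfun values as reals
  have hPfun0 : Pfun μx μy r g Fh (zf 0) (yf 0)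
      = ((1 / (2 * μx) * ‖zf 0‖ ^ 2 + μy / 2 * ‖yf 0‖ ^ 2
          + (conjG r g Fh (zf 0) (yf 0)).toReal : ℝ) : EReal) := by
    show ((1 / (2 * μx) * ‖zf 0‖ ^ 2 + μy / 2 * ‖yf 0‖ ^ 2 : ℝ) : EReal)
        + conjG r g Fh (zf 0) (yf 0) = _
    conv_lhs => rw [hGfin 0 (Nat.zero_le K)]
    rw [← EReal.coe_add]
  have hPfunstar : Pfun μx μy r g Fh zstar ystar
      = ((1 / (2 * μx) * ‖zstar‖ ^ 2 + μy / 2 * ‖ystar‖ ^ 2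
          + (conjG r g Fh zstar ystar).toReal : ℝ) : EReal) := by
    show ((1 / (2 * μx) * ‖zstar‖ ^ 2 + μy / 2 * ‖ystar‖ ^ 2 : ℝ) : EReal)
        + conjG r g Fh zstar ystar = _
    conv_lhs => rw [hGstar']
    rw [← EReal.coe_add]
  have hL0eq : L0 = ((Φ 0 : ℝ) : EReal) := by
    rw [hΦ 0, hL0, hPfun0, hPfunstar, ← EReal.coe_sub, ← EReal.coe_mul, ← EReal.coe_add]
  -- claim 1 (real version)
  have hreal : 1/ηz*‖z K - zstar‖^2 + 1/ηy*‖y K - ystar‖^2 ≤ (1-ρ)^K * Φ 0 := by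
    have h1 := hcontr K le_rfl
    rw [hΦ K] at h1
    have h2 := hps_le K le_rfl
    have h3 : 0 ≤ 2/α*((1/(2*μx)*‖zf K‖^2 + μy/2*‖yf K‖^2
          + (conjG r g Fh (zf K) (yf K)).toReal)
        - (1/(2*μx)*‖zstar‖^2 + μy/2*‖ystar‖^2
          + (conjG r g Fh zstar ystar).toReal)) :=
      mul_nonneg (by positivity) (by linarith)
    linarith
  constructor
  · rw [hL0eq, ← EReal.coe_mul]
    exact EReal.coe_le_coe_iff.mpr hreal
  · have hx : (-μx⁻¹) • z K - xstar = (-μx⁻¹) • (z K - zstar) := by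
      rw [hzstar]
      match_scalars <;> field_simp
    have hnx : ‖(-μx⁻¹) • z K - xstar‖^2 = (μx⁻¹)^2 * ‖z K - zstar‖^2 := by
      rw [hx, norm_smul, Real.norm_eq_abs, abs_neg, abs_of_pos hμxinv, mul_pow]
    have hmaxnn : (0:ℝ) ≤ max (ηz * (μx⁻¹)^2) ηy :=
      le_trans hηypos.le (le_max_right _ _)
    have h2a : (μx⁻¹)^2 * ‖z K - zstar‖^2
        ≤ (max (ηz*(μx⁻¹)^2) ηy) * (1/ηz*‖z K - zstar‖^2) := by
      calc (μx⁻¹)^2 * ‖z K - zstar‖^2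
          = (ηz*(μx⁻¹)^2) * (1/ηz*‖z K - zstar‖^2) := by
            field_simp
            try ring
        _ ≤ (max (ηz*(μx⁻¹)^2) ηy) * (1/ηz*‖z K - zstar‖^2) :=
            mul_le_mul_of_nonneg_right (le_max_left _ _) (by positivity)
    have h2b : ‖y K - ystar‖^2
        ≤ (max (ηz*(μx⁻¹)^2) ηy) * (1/ηy*‖y K - ystar‖^2) := by
      calc ‖y K - ystar‖^2 = ηy * (1/ηy*‖y K - ystar‖^2) := by
            field_simp
        _ ≤ (max (ηz*(μx⁻¹)^2) ηy) * (1/ηy*‖y K - ystar‖^2) :=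
            mul_le_mul_of_nonneg_right (le_max_right _ _) (by positivity)
    have hmul : (max (ηz*(μx⁻¹)^2) ηy) * (1/ηz*‖z K - zstar‖^2 + 1/ηy*‖y K - ystar‖^2)
        ≤ (max (ηz*(μx⁻¹)^2) ηy) * ((1-ρ)^K * Φ 0) :=
      mul_le_mul_of_nonneg_left hreal hmaxnn
    have hreal2 : ‖(-μx⁻¹) • z K - xstar‖^2 + ‖y K - ystar‖^2
        ≤ max (ηz * (μx⁻¹)^2) ηy * Φ 0 * (1-ρ)^K := by
      rw [hnx]
      have e1 : (max (ηz*(μx⁻¹)^2) ηy) * (1/ηz*‖z K - zstar‖^2 + 1/ηy*‖y K - ystar‖^2)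
          = (max (ηz*(μx⁻¹)^2) ηy) * (1/ηz*‖z K - zstar‖^2)
            + (max (ηz*(μx⁻¹)^2) ηy) * (1/ηy*‖y K - ystar‖^2) := by ring
      have e2 : (max (ηz*(μx⁻¹)^2) ηy) * ((1-ρ)^K * Φ 0)
          = max (ηz * (μx⁻¹)^2) ηy * Φ 0 * (1-ρ)^K := by ring
      linarith
    rw [hL0eq, ← EReal.coe_mul, ← EReal.coe_mul]
    exact EReal.coe_le_coe_iff.mpr hreal2
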